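/- For every parallelized quantum 2-tester (Π₁, Π₂) with Π₁ + Π₂ = I₈ ⊗ X, there exists a parallelized quantum 2-tester (Π₁', Π₂') with Π₁' + Π₂' = I₈ ⊗ X' such that (1/2)·Tr(M₁Π₁' + M₂Π₂') = (1/2)·Tr(M₁Π₁ + M₂Π₂) and X' commutes with B⊗B⊗B for every B ∈ SU(2). Consequently the optimal average success probability of (1,1)-equivalence determination under parallelized schemes is achieved with such a commuting X. -/

import Mathlib

open MeasureTheory Matrix ComplexOrder

noncomputable section

/-- `SU(2)`: the special unitary group of 2×2 complex matrices. -/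
abbrev SU2 := Matrix.specialUnitaryGroup (Fin 2) ℂ

instance : MeasurableSpace SU2 := borel SU2

abbrev Q := Fin 2

abbrev Mat2 := Matrix Q Q ℂ

/-- The rank-one outer product `|v⟩⟨v|`. -/
def outer {n : Type*} (v : n → ℂ) : Matrix n n ℂ :=
  fun a b => v a * (starRingEnd ℂ) (v b)

/-- Index of the three-qubit factor `K1⊗K2⊗K3` (or `H1⊗H2⊗H3`). -/
abbrev Idx3 := Q × Q × Q

abbrev Mat8 := Matrix Idx3 Idx3 ℂ

/-- Index of the six-qubit space `K1⊗K2⊗K3⊗H1⊗H2⊗H3`. -/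
abbrev Idx6 := Idx3 × Idx3

abbrev Mat64 := Matrix Idx6 Idx6 ℂ

/-- Kronecker product of three qubit operators. -/
def kron3 (A B C : Mat2) : Mat8 :=
  fun p q => A p.1 q.1 * B p.2.1 q.2.1 * C p.2.2 q.2.2

/-- The unnormalized maximally entangled vector `|I⟩⟩ = Σ |ijk⟩⊗|ijk⟩`. -/
def ketI : Idx6 → ℂ := fun p => if p.1 = p.2 then 1 else 0

/-- `W ⊗ I₈`. -/
def WtI (W : Mat8) : Mat64 := fun p q => W p.1 q.1 * (if p.2 = q.2 then 1 else 0)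

/-- `|W⟩⟩ = (W ⊗ I₈)|I⟩⟩`. -/
def ketW (W : Mat8) : Idx6 → ℂ := WtI W *ᵥ ketI

/-- `M₁ = ∫∫ |U₁⊗U₂⊗U₁⟩⟩⟨⟨U₁⊗U₂⊗U₁| dμ(U₁)dμ(U₂)`, the integral taken entrywise. -/
def M1 (μ : Measure SU2) : Mat64 := fun a b =>
  ∫ U₁ : SU2, ∫ U₂ : SU2, outer (ketW (kron3 U₁ U₂ U₁)) a b ∂μ ∂μ

/-- `M₂ = ∫∫ |U₁⊗U₂⊗U₂⟩⟩⟨⟨U₁⊗U₂⊗U₂| dμ(U₁)dμ(U₂)`, the integral taken entrywise. -/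
def M2 (μ : Measure SU2) : Mat64 := fun a b =>
  ∫ U₁ : SU2, ∫ U₂ : SU2, outer (ketW (kron3 U₁ U₂ U₂)) a b ∂μ ∂μ

/-- `I₈ ⊗ X` : identity on `K1⊗K2⊗K3` tensored with `X` on `H1⊗H2⊗H3`. -/
def IdKX (X : Mat8) : Mat64 := fun p q => (if p.1 = q.1 then 1 else 0) * X p.2 q.2

lemma SU2.star_mem {A : Mat2} (hA : A ∈ Matrix.specialUnitaryGroup (Fin 2) ℂ) :
    star A ∈ Matrix.specialUnitaryGroup (Fin 2) ℂ := by
  obtain ⟨h1, h2⟩ := Matrix.mem_specialUnitaryGroup_iff.mp hA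
  refine Matrix.mem_specialUnitaryGroup_iff.mpr ⟨?_, ?_⟩
  · exact Unitary.star_mem h1
  · rw [Matrix.star_eq_conjTranspose, Matrix.det_conjTranspose, h2, star_one]

instance : Group SU2 :=
  { (inferInstance : Monoid SU2) with
    inv := fun A => ⟨star A.1, SU2.star_mem A.2⟩
    inv_mul_cancel := fun A => Subtype.ext (by
      simpa using A.2.1.1) }

example (A B : SU2) : ((A*B : SU2) : Mat2) = (A:Mat2)*(B:Mat2) := rfl
example (A : SU2) : ((A⁻¹ : SU2) : Mat2) = star (A:Mat2) := rfl

instance : IsTopologicalGroup SU2 where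
  continuous_mul := Continuous.subtype_mk
    ((continuous_subtype_val.comp continuous_fst).matrix_mul
      (continuous_subtype_val.comp continuous_snd)) _
  continuous_inv := Continuous.subtype_mk continuous_subtype_val.matrix_conjTranspose _

instance : CompactSpace SU2 := by
  have hsub : (Matrix.specialUnitaryGroup (Fin 2) ℂ : Set Mat2) ⊆
      Set.pi Set.univ (fun _ : Q => Set.pi Set.univ fun _ : Q => Metric.closedBall (0:ℂ) 1) := by
    intro A hA
    refine Set.mem_pi.mpr fun i _ => Set.mem_pi.mpr fun j _ => ?_
    exact mem_closedBall_zero_iff.mpr (entry_norm_bound_of_unitary hA.1 i j)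
  have hcomp : IsCompact (Set.pi Set.univ
      (fun _ : Q => Set.pi Set.univ fun _ : Q => Metric.closedBall (0:ℂ) 1)) :=
    isCompact_univ_pi fun _ => isCompact_univ_pi fun _ => isCompact_closedBall 0 1
  have hclosed : IsClosed (Matrix.specialUnitaryGroup (Fin 2) ℂ : Set Mat2) := by
    have : (Matrix.specialUnitaryGroup (Fin 2) ℂ : Set Mat2) =
        {A : Mat2 | star A * A = 1} ∩ {A : Mat2 | A * star A = 1} ∩ {A : Mat2 | A.det = 1} := by
      ext A
      simp only [Set.mem_inter_iff, Set.mem_setOf_eq, SetLike.mem_coe,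
        Matrix.mem_specialUnitaryGroup_iff]
      exact ⟨fun ⟨⟨h1,h2⟩,h3⟩ => ⟨⟨h1,h2⟩,h3⟩, fun ⟨⟨h1,h2⟩,h3⟩ => ⟨⟨h1,h2⟩,h3⟩⟩
    rw [this]
    refine (IsClosed.inter (IsClosed.inter ?_ ?_) ?_)
    · exact isClosed_eq (continuous_id.matrix_conjTranspose.matrix_mul continuous_id)
        continuous_const
    · exact isClosed_eq (continuous_id.matrix_mul continuous_id.matrix_conjTranspose)
        continuous_const
    · exact isClosed_eq (continuous_id.matrix_det) continuous_const
  exact isCompact_iff_compactSpace.mp (hcomp.of_isClosed_subset hclosed hsub)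

instance : SecondCountableTopology Mat2 :=
  (inferInstance : SecondCountableTopology (Q → Q → ℂ))

instance : SecondCountableTopology SU2 :=
  TopologicalSpace.secondCountableTopology_induced SU2 Mat2 Subtype.val

instance : BorelSpace SU2 := ⟨rfl⟩

open scoped ENNReal

section MeasureLayer
variable (μ : Measure SU2) [IsProbabilityMeasure μ] [μ.IsMulLeftInvariant]

theorem SU2.isHaar : μ.IsHaarMeasure := by
  have : Measure.IsOpenPosMeasure μ :=
    MeasureTheory.isOpenPosMeasure_of_mulLeftInvariant_of_compact (μ := μ) Set.univ isCompact_univ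
      (by simp)
  exact { lt_top_of_isCompact := fun _ _ => measure_lt_top μ _ }

theorem SU2.map_mul_right (b : SU2) : μ.map (· * b) = μ := by
  have hmb : Measurable fun x : SU2 => x * b := (continuous_mul_right b).measurable
  have hP : IsProbabilityMeasure (μ.map (· * b)) := Measure.isProbabilityMeasure_map hmb.aemeasurable
  have hL : (μ.map (· * b)).IsMulLeftInvariant := by
    constructor
    intro a
    have hma : Measurable fun x : SU2 => a * x := (continuous_mul_left a).measurable
    rw [Measure.map_map hma hmb, show ((a * ·) ∘ (· * b)) = ((· * b) ∘ (a * ·)) by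
      ext x; simp [mul_assoc], ← Measure.map_map hmb hma]
    rw [MeasureTheory.map_mul_left_eq_self]
  have h1 : (μ.map (· * b)).IsHaarMeasure := SU2.isHaar _
  have h2 : μ.IsHaarMeasure := SU2.isHaar μ
  exact MeasureTheory.Measure.isHaarMeasure_eq_of_isProbabilityMeasure _ μ

theorem SU2.integral_mul_right (b : SU2) (f : SU2 → ℂ) (hf : Continuous f) :
    ∫ x, f (x * b) ∂μ = ∫ x, f x ∂μ := by
  conv_rhs => rw [← SU2.map_mul_right μ b]
  rw [integral_map ((continuous_mul_right b).measurable.aemeasurable)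
    hf.aestronglyMeasurable]

theorem SU2.integral_mul_left (b : SU2) (f : SU2 → ℂ) (hf : Continuous f) :
    ∫ x, f (b * x) ∂μ = ∫ x, f x ∂μ := by
  conv_rhs => rw [← MeasureTheory.map_mul_left_eq_self μ b]
  rw [integral_map ((continuous_mul_left b).measurable.aemeasurable)
    hf.aestronglyMeasurable]

theorem SU2.integrable (f : SU2 → ℂ) (hf : Continuous f) : Integrable f μ :=
  hf.integrable_of_hasCompactSupport (HasCompactSupport.of_compactSpace f)

end MeasureLayer

-- matrix algebra lemmas
lemma ketW_apply (W : Mat8) (p : Idx6) : ketW W p = W p.1 p.2 := by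
  simp only [ketW, WtI, ketI, mulVec, dotProduct]
  rw [Fintype.sum_prod_type]
  simp [mul_ite, ite_and]

lemma kron3_eq (A B C : Mat2) :
    kron3 A B C = Matrix.kroneckerMap (· * ·) A (Matrix.kroneckerMap (· * ·) B C) := by
  ext p q
  simp [kron3, Matrix.kroneckerMap_apply, mul_assoc]

lemma kron3_mul (A B C D E F : Mat2) :
    kron3 A B C * kron3 D E F = kron3 (A*D) (B*E) (C*F) := by
  simp only [kron3_eq]
  rw [← Matrix.mul_kronecker_mul, ← Matrix.mul_kronecker_mul]

lemma kron3_conjTranspose (A B C : Mat2) :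
    (kron3 A B C)ᴴ = kron3 Aᴴ Bᴴ Cᴴ := by
  ext p q
  simp [kron3, Matrix.conjTranspose_apply, mul_comm, mul_assoc, mul_left_comm]

lemma kron3_transpose (A B C : Mat2) :
    (kron3 A B C)ᵀ = kron3 Aᵀ Bᵀ Cᵀ := by
  ext p q
  simp [kron3, Matrix.transpose_apply]

lemma kron3_one : kron3 1 1 1 = (1 : Mat8) := by
  ext p q
  simp only [kron3, Matrix.one_apply, Prod.ext_iff]
  rcases p with ⟨p1, p2, p3⟩
  rcases q with ⟨q1, q2, q3⟩
  by_cases h1 : p1 = q1 <;> by_cases h2 : p2 = q2 <;> by_cases h3 : p3 = q3 <;>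
    simp [h1, h2, h3]

lemma outer_conj {n : Type*} [Fintype n] (G : Matrix n n ℂ) (v : n → ℂ) :
    G * outer v * Gᴴ = outer (G *ᵥ v) := by
  ext a b
  simp only [Matrix.mul_apply, outer, Matrix.conjTranspose_apply, Matrix.mulVec, dotProduct,
    Finset.sum_mul, Finset.mul_sum, starRingEnd_apply, star_sum, star_mul']
  refine Finset.sum_congr rfl fun r _ => Finset.sum_congr rfl fun s _ => ?_
  ring

lemma IdKX_eq (A : Mat8) : IdKX A = Matrix.kroneckerMap (· * ·) (1 : Mat8) A := by
  ext p q
  simp [IdKX, Matrix.kroneckerMap_apply, Matrix.one_apply]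

lemma IdKX_mul (A B : Mat8) : IdKX A * IdKX B = IdKX (A * B) := by
  simp only [IdKX_eq]
  rw [← Matrix.mul_kronecker_mul, Matrix.one_mul]

lemma IdKX_conjTranspose (A : Mat8) : (IdKX A)ᴴ = IdKX Aᴴ := by
  ext p q
  simp only [IdKX, Matrix.conjTranspose_apply]
  rcases eq_or_ne p.1 q.1 with h | h
  · simp [h]
  · simp [h, h.symm]

lemma IdKX_add (A B : Mat8) : IdKX A + IdKX B = IdKX (A + B) := by
  ext p q; simp [IdKX, Matrix.add_apply, mul_add]

lemma IdKX_mulVec_ketW (V W : Mat8) : IdKX V *ᵥ ketW W = ketW (W * Vᵀ) := by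
  funext p
  have h1 : ∀ q : Idx6, IdKX V p q * ketW W q
      = if p.1 = q.1 then V p.2 q.2 * W q.1 q.2 else 0 := by
    intro q
    rw [ketW_apply]
    simp only [IdKX]
    split_ifs <;> ring
  show (∑ q : Idx6, IdKX V p q * ketW W q) = _
  rw [Finset.sum_congr rfl fun q _ => h1 q, Fintype.sum_prod_type]
  have h2 : ∀ q1 : Idx3, (∑ q2 : Idx3, if p.1 = q1 then V p.2 q2 * W q1 q2 else 0)
      = if p.1 = q1 then ∑ q2 : Idx3, V p.2 q2 * W q1 q2 else 0 := by
    intro q1; split_ifs <;> simp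
  rw [Finset.sum_congr rfl fun q1 _ => h2 q1]
  simp only [Finset.sum_ite_eq, Finset.mem_univ, if_true]
  rw [ketW_apply, Matrix.mul_apply]
  simp [Matrix.transpose_apply, mul_comm]

set_option linter.unusedSectionVars false

-- SU2 specific matrix lemmas
def cB (B : SU2) : Mat8 := kron3 (B : Mat2) (B : Mat2) (B : Mat2)

lemma cB_mul (A B : SU2) : cB (A * B) = cB A * cB B := by
  rw [cB, cB, cB, kron3_mul]; rfl

lemma star_mul_self_SU2 (B : SU2) : ((B : Mat2))ᴴ * (B : Mat2) = 1 := B.2.1.1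
lemma mul_star_self_SU2 (B : SU2) : (B : Mat2) * ((B : Mat2))ᴴ = 1 := B.2.1.2

lemma cB_H_mul (B : SU2) : (cB B)ᴴ * cB B = 1 := by
  rw [cB, kron3_conjTranspose, kron3_mul, star_mul_self_SU2, kron3_one]

lemma cB_mul_H (B : SU2) : cB B * (cB B)ᴴ = 1 := by
  rw [cB, kron3_conjTranspose, kron3_mul, mul_star_self_SU2, kron3_one]

def SU2.conj (B : SU2) : SU2 := by
  refine ⟨((B : Mat2))ᴴᵀ, ?_⟩
  have hmap : ((B : Mat2))ᴴᵀ = (B : Mat2).map (starRingEnd ℂ) := by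
    ext i j
    simp [Matrix.conjTranspose_apply, Matrix.transpose_apply, Matrix.map_apply]
  rw [hmap]
  have hct : ((B : Mat2).map (starRingEnd ℂ))ᴴ = ((B : Mat2))ᴴ.map (starRingEnd ℂ) :=
    Matrix.conjTranspose_map (starRingEnd ℂ) (fun x => by simp)
  refine Matrix.mem_specialUnitaryGroup_iff.mpr ⟨⟨?_, ?_⟩, ?_⟩
  · show star ((B : Mat2).map (starRingEnd ℂ)) * _ = 1
    rw [Matrix.star_eq_conjTranspose, hct, ← Matrix.map_mul, star_mul_self_SU2]
    simp
  · show (B : Mat2).map (starRingEnd ℂ) * star ((B : Mat2).map (starRingEnd ℂ)) = 1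
    rw [Matrix.star_eq_conjTranspose, hct, ← Matrix.map_mul, mul_star_self_SU2]
    simp
  · rw [show (B : Mat2).map (starRingEnd ℂ) = (starRingEnd ℂ).mapMatrix (B : Mat2) from rfl,
      ← RingHom.map_det]
    have hdet : (B : Mat2).det = 1 := (Matrix.mem_specialUnitaryGroup_iff.mp B.2).2
    rw [hdet, _root_.map_one]

lemma cB_H_T (B : SU2) : ((cB B)ᴴ)ᵀ = cB (SU2.conj B) := by
  rw [cB, kron3_conjTranspose, kron3_transpose]; rfl

-- continuity helpers
lemma cont_entry (i j : Q) : Continuous fun B : SU2 => (B : Mat2) i j := by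
  have h1 : Continuous fun M : Mat2 => M i j := (continuous_apply j).comp (continuous_apply i)
  exact h1.comp continuous_subtype_val

lemma cont_cB (a b : Idx3) : Continuous fun B : SU2 => cB B a b := by
  show Continuous fun B : SU2 =>
    (B : Mat2) a.1 b.1 * (B : Mat2) a.2.1 b.2.1 * (B : Mat2) a.2.2 b.2.2
  exact ((cont_entry _ _).mul (cont_entry _ _)).mul (cont_entry _ _)

lemma cont_mul_entry {n : Type*} [Fintype n] {f g : SU2 → Matrix n n ℂ}
    (hf : ∀ a b, Continuous fun x => f x a b) (hg : ∀ a b, Continuous fun x => g x a b) :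
    ∀ a b, Continuous fun x => (f x * g x) a b := by
  intro a b
  simp only [Matrix.mul_apply]
  exact continuous_finset_sum _ fun r _ => (hf a r).mul (hg r b)

lemma cont_conjT_entry {n : Type*} {f : SU2 → Matrix n n ℂ}
    (hf : ∀ a b, Continuous fun x => f x a b) :
    ∀ a b, Continuous fun x => (f x)ᴴ a b := by
  intro a b
  show Continuous fun x => star (f x b a)
  exact continuous_star.comp (hf b a)

lemma cont_const_entry {n : Type*} (M : Matrix n n ℂ) :
    ∀ a b, Continuous fun _ : SU2 => M a b := fun _ _ => continuous_const

lemma cont_cXcH (X : Mat8) :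
    ∀ a b, Continuous fun B : SU2 => (cB B * X * (cB B)ᴴ) a b :=
  cont_mul_entry (cont_mul_entry cont_cB (cont_const_entry X)) (cont_conjT_entry cont_cB)

lemma cont_IdKX_entry {f : SU2 → Mat8} (hf : ∀ a b, Continuous fun x => f x a b) :
    ∀ (a b : Idx6), Continuous fun x => IdKX (f x) a b := by
  intro a b
  show Continuous fun x => (if a.1 = b.1 then (1:ℂ) else 0) * f x a.2 b.2
  exact continuous_const.mul (hf a.2 b.2)

-- entries of outer/ketW as functions of an SU2 variable
lemma cont_ketW3 {f g h : SU2 → Mat2}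
    (hf : ∀ i j, Continuous fun x => f x i j) (hg : ∀ i j, Continuous fun x => g x i j)
    (hh : ∀ i j, Continuous fun x => h x i j) (p : Idx6) :
    Continuous fun x => ketW (kron3 (f x) (g x) (h x)) p := by
  simp only [ketW_apply, kron3]
  exact ((hf _ _).mul (hg _ _)).mul (hh _ _)

lemma cont_outer {v : SU2 → Idx6 → ℂ} (hv : ∀ p, Continuous fun x => v x p) (a b : Idx6) :
    Continuous fun x => outer (v x) a b := by
  show Continuous fun x => v x a * (starRingEnd ℂ) (v x b)
  exact (hv a).mul (continuous_star.comp (hv b))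

lemma cont_entry_of_coe {u : SU2 → SU2} (hu : Continuous u) (i j : Q) :
    Continuous fun x => ((u x : SU2) : Mat2) i j := (cont_entry i j).comp hu

-- norm bounds
lemma norm_entry_le_one (B : SU2) (i j : Q) : ‖(B : Mat2) i j‖ ≤ 1 :=
  entry_norm_bound_of_unitary B.2.1 i j

lemma norm_ketW_le_one (B₁ B₂ B₃ : SU2) (p : Idx6) :
    ‖ketW (kron3 (B₁ : Mat2) (B₂ : Mat2) (B₃ : Mat2)) p‖ ≤ 1 := by
  rw [ketW_apply]
  show ‖(B₁ : Mat2) p.1.1 p.2.1 * (B₂ : Mat2) p.1.2.1 p.2.2.1 * (B₃ : Mat2) p.1.2.2 p.2.2.2‖ ≤ 1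
  rw [norm_mul, norm_mul]
  have h1 := norm_entry_le_one B₁ p.1.1 p.2.1
  have h2 := norm_entry_le_one B₂ p.1.2.1 p.2.2.1
  have h3 := norm_entry_le_one B₃ p.1.2.2 p.2.2.2
  have := mul_le_one₀ (mul_le_one₀ h1 (norm_nonneg _) h2) (norm_nonneg _) h3
  exact this

lemma norm_outer_le_one (B₁ B₂ B₃ : SU2) (a b : Idx6) :
    ‖outer (ketW (kron3 (B₁ : Mat2) (B₂ : Mat2) (B₃ : Mat2))) a b‖ ≤ 1 := by
  show ‖_ * (starRingEnd ℂ) _‖ ≤ 1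
  rw [norm_mul, RCLike.norm_conj]
  exact mul_le_one₀ (norm_ketW_le_one _ _ _ _) (norm_nonneg _) (norm_ketW_le_one _ _ _ _)

section IntMat
variable (μ : Measure SU2) [IsProbabilityMeasure μ] [μ.IsMulLeftInvariant]

def intMat {n : Type*} (f : SU2 → Matrix n n ℂ) : Matrix n n ℂ := fun a b => ∫ x, f x a b ∂μ

lemma intMat_mul_mul {n : Type*} [Fintype n] (C D : Matrix n n ℂ) (f : SU2 → Matrix n n ℂ)
    (hf : ∀ a b, Continuous fun x => f x a b) :
    C * intMat μ f * D = intMat μ (fun x => C * f x * D) := by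
  ext a b
  show (∑ s, (∑ r, C a r * (∫ x, f x r s ∂μ)) * D s b) = ∫ x, (C * f x * D) a b ∂μ
  have h1 : ∀ x, (C * f x * D) a b = ∑ s, ∑ r, C a r * f x r s * D s b := by
    intro x
    simp only [Matrix.mul_apply, Finset.sum_mul]
  simp only [h1]
  rw [MeasureTheory.integral_finset_sum (f := fun s x => ∑ r, C a r * f x r s * D s b) _ (fun s _ =>
    SU2.integrable μ _ (continuous_finset_sum _ fun r _ =>
      (continuous_const.mul (hf r s)).mul continuous_const))]
  refine Finset.sum_congr rfl fun s _ => ?_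
  rw [Finset.sum_mul, MeasureTheory.integral_finset_sum (f := fun r x => C a r * f x r s * D s b) _ (fun r _ =>
    SU2.integrable μ _ ((continuous_const.mul (hf r s)).mul continuous_const))]
  refine Finset.sum_congr rfl fun r _ => ?_
  rw [show (fun x => C a r * f x r s * D s b) = fun x => C a r * (f x r s * D s b) by
    funext x; ring]
  rw [MeasureTheory.integral_const_mul, MeasureTheory.integral_mul_const]
  ring

lemma trace_mul_intMat {n : Type*} [Fintype n] (A : Matrix n n ℂ) (f : SU2 → Matrix n n ℂ)
    (hf : ∀ a b, Continuous fun x => f x a b) :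
    (A * intMat μ f).trace = ∫ x, (A * f x).trace ∂μ := by
  have h1 : ∀ x, (A * f x).trace = ∑ a, ∑ b, A a b * f x b a := by
    intro x; simp only [Matrix.trace, Matrix.diag, Matrix.mul_apply]
  simp only [h1]
  rw [MeasureTheory.integral_finset_sum (f := fun a x => ∑ b, A a b * f x b a) _ (fun a _ =>
    SU2.integrable μ _ (continuous_finset_sum _ fun b _ => continuous_const.mul (hf b a)))]
  have h2 : (A * intMat μ f).trace = ∑ a, ∑ b, A a b * intMat μ f b a := by
    simp only [Matrix.trace, Matrix.diag, Matrix.mul_apply]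
  rw [h2]
  refine Finset.sum_congr rfl fun a _ => ?_
  rw [MeasureTheory.integral_finset_sum (f := fun b x => A a b * f x b a) _ (fun b _ =>
    SU2.integrable μ _ (continuous_const.mul (hf b a)))]
  refine Finset.sum_congr rfl fun b _ => ?_
  rw [MeasureTheory.integral_const_mul]
  rfl

lemma intMat_trace {n : Type*} [Fintype n] (f : SU2 → Matrix n n ℂ)
    (hf : ∀ a b, Continuous fun x => f x a b) :
    (intMat μ f).trace = ∫ x, (f x).trace ∂μ := by
  show (∑ a, ∫ x, f x a a ∂μ) = ∫ x, (f x).trace ∂μ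
  rw [show (fun x => (f x).trace) = fun x => ∑ a, f x a a from rfl,
    MeasureTheory.integral_finset_sum _ (fun a _ => SU2.integrable μ _ (hf a a))]

lemma intMat_add {n : Type*} (f g : SU2 → Matrix n n ℂ)
    (hf : ∀ a b, Continuous fun x => f x a b) (hg : ∀ a b, Continuous fun x => g x a b) :
    intMat μ f + intMat μ g = intMat μ (fun x => f x + g x) := by
  ext a b
  show (∫ x, f x a b ∂μ) + (∫ x, g x a b ∂μ) = ∫ x, (f x + g x) a b ∂μ
  rw [show (fun x => (f x + g x) a b) = fun x => f x a b + g x a b from rfl,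
    MeasureTheory.integral_add (SU2.integrable μ _ (hf a b)) (SU2.integrable μ _ (hg a b))]

lemma intMat_IdKX (f : SU2 → Mat8) (hf : ∀ a b, Continuous fun x => f x a b) :
    IdKX (intMat μ f) = intMat μ (fun x => IdKX (f x)) := by
  ext a b
  show (if a.1 = b.1 then (1:ℂ) else 0) * (∫ x, f x a.2 b.2 ∂μ)
    = ∫ x, (if a.1 = b.1 then (1:ℂ) else 0) * f x a.2 b.2 ∂μ
  rw [MeasureTheory.integral_const_mul]

lemma intMat_posSemidef {n : Type*} [Fintype n] (f : SU2 → Matrix n n ℂ)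
    (hf : ∀ a b, Continuous fun x => f x a b) (hpos : ∀ x, (f x).PosSemidef) :
    (intMat μ f).PosSemidef := by
  rw [Matrix.posSemidef_iff_dotProduct_mulVec]
  constructor
  · ext a b
    show star (∫ x, f x b a ∂μ) = ∫ x, f x a b ∂μ
    have : ∀ x, f x a b = star (f x b a) := by
      intro x
      rw [← Matrix.conjTranspose_apply, (hpos x).1.eq]
    simp only [this]
    exact (integral_conj (f := fun x => f x b a)).symm
  · intro y
    have hswap : star y ⬝ᵥ (intMat μ f) *ᵥ y = ∫ x, star y ⬝ᵥ (f x) *ᵥ y ∂μ := by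
      show (∑ a, star (y a) * ∑ b, (intMat μ f) a b * y b) = _
      have h1 : ∀ x, star y ⬝ᵥ (f x) *ᵥ y = ∑ a, ∑ b, star (y a) * (f x a b * y b) := by
        intro x
        simp only [dotProduct, Matrix.mulVec, Pi.star_apply, Finset.mul_sum]
      simp only [h1, Finset.mul_sum]
      rw [MeasureTheory.integral_finset_sum (f := fun a x => ∑ b, star (y a) * (f x a b * y b)) _ (fun a _ =>
        SU2.integrable μ _ (continuous_finset_sum _ fun b _ =>
          continuous_const.mul ((hf a b).mul continuous_const)))]
      refine Finset.sum_congr rfl fun a _ => ?_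
      rw [MeasureTheory.integral_finset_sum (f := fun b x => star (y a) * (f x a b * y b)) _ (fun b _ =>
        SU2.integrable μ _ (continuous_const.mul ((hf a b).mul continuous_const)))]
      refine Finset.sum_congr rfl fun b _ => ?_
      rw [MeasureTheory.integral_const_mul, MeasureTheory.integral_mul_const]
      rfl
    rw [hswap]
    have hcont : Continuous fun x => star y ⬝ᵥ (f x) *ᵥ y := by
      show Continuous fun x => ∑ a, star y a * ∑ b, f x a b * y b
      exact continuous_finset_sum _ fun a _ => continuous_const.mul
        (continuous_finset_sum _ fun b _ => (hf a b).mul continuous_const)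
    have hint : Integrable (fun x => star y ⬝ᵥ (f x) *ᵥ y) μ := SU2.integrable μ _ hcont
    have hpt : ∀ x, 0 ≤ star y ⬝ᵥ (f x) *ᵥ y := fun x => (hpos x).dotProduct_mulVec_nonneg y
    rw [Complex.le_def]
    constructor
    · have h1 := integral_re hint
      simp only [RCLike.re_to_complex] at h1
      rw [Complex.zero_re, ← h1]
      exact MeasureTheory.integral_nonneg fun x => by
        have h := hpt x; rw [Complex.le_def] at h; simpa using h.1
    · have h2 := integral_im hint
      simp only [RCLike.im_to_complex] at h2
      rw [Complex.zero_im, ← h2]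
      have hz : ∀ x, (star y ⬝ᵥ (f x) *ᵥ y).im = 0 := fun x => by
        have h := hpt x; rw [Complex.le_def] at h; simpa using h.2.symm
      simp only [hz, MeasureTheory.integral_zero]
end IntMat




lemma gH_outer_g (B : SU2) (W : Mat8) :
    (IdKX (cB B))ᴴ * outer (ketW W) * IdKX (cB B) = outer (ketW (W * cB (SU2.conj B))) := by
  have h := outer_conj ((IdKX (cB B))ᴴ) (ketW W)
  rw [Matrix.conjTranspose_conjTranspose] at h
  rw [h, IdKX_conjTranspose, IdKX_mulVec_ketW, cB_H_T]

section Main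
variable (μ : Measure SU2) [IsProbabilityMeasure μ] [μ.IsMulLeftInvariant]

def N1 (U₁ : SU2) : Mat64 := intMat μ (fun U₂ =>
  outer (ketW (kron3 (U₁ : Mat2) (U₂ : Mat2) (U₁ : Mat2))))
def N2 (U₁ : SU2) : Mat64 := intMat μ (fun U₂ =>
  outer (ketW (kron3 (U₁ : Mat2) (U₂ : Mat2) (U₂ : Mat2))))

set_option maxHeartbeats 1000000

lemma cont_inner1 (U₁ : SU2) (a b : Idx6) :
    Continuous fun U₂ : SU2 => outer (ketW (kron3 (U₁:Mat2) (U₂:Mat2) (U₁:Mat2))) a b :=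
  cont_outer (v := fun U₂ : SU2 => ketW (kron3 (U₁:Mat2) (U₂:Mat2) (U₁:Mat2)))
    (fun p => cont_ketW3 (f := fun _ => (U₁:Mat2)) (g := fun U₂ : SU2 => (U₂:Mat2))
      (h := fun _ => (U₁:Mat2)) (fun _ _ => continuous_const) cont_entry
      (fun _ _ => continuous_const) p) a b

lemma cont_inner2 (U₁ : SU2) (a b : Idx6) :
    Continuous fun U₂ : SU2 => outer (ketW (kron3 (U₁:Mat2) (U₂:Mat2) (U₂:Mat2))) a b :=
  cont_outer (v := fun U₂ : SU2 => ketW (kron3 (U₁:Mat2) (U₂:Mat2) (U₂:Mat2)))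
    (fun p => cont_ketW3 (f := fun _ => (U₁:Mat2)) (g := fun U₂ : SU2 => (U₂:Mat2))
      (h := fun U₂ : SU2 => (U₂:Mat2)) (fun _ _ => continuous_const) cont_entry
      cont_entry p) a b

lemma cont_N1 (a b : Idx6) : Continuous fun U₁ : SU2 => N1 μ U₁ a b := by
  show Continuous fun U₁ : SU2 =>
    ∫ U₂, outer (ketW (kron3 (U₁:Mat2) (U₂:Mat2) (U₁:Mat2))) a b ∂μ
  refine MeasureTheory.continuous_of_dominated (bound := fun _ => (1:ℝ)) ?_ ?_ ?_ ?_
  · intro U₁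
    exact (cont_inner1 U₁ a b).aestronglyMeasurable
  · intro U₁
    exact Filter.Eventually.of_forall fun U₂ => norm_outer_le_one U₁ U₂ U₁ a b
  · exact MeasureTheory.integrable_const 1
  · exact Filter.Eventually.of_forall fun U₂ =>
      cont_outer (v := fun U₁ : SU2 => ketW (kron3 (U₁:Mat2) (U₂:Mat2) (U₁:Mat2)))
        (fun p => cont_ketW3 (f := fun U₁ : SU2 => (U₁:Mat2)) (g := fun _ => (U₂:Mat2))
          (h := fun U₁ : SU2 => (U₁:Mat2)) cont_entry (fun _ _ => continuous_const)
          cont_entry p) a b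

lemma cont_N2 (a b : Idx6) : Continuous fun U₁ : SU2 => N2 μ U₁ a b := by
  show Continuous fun U₁ : SU2 =>
    ∫ U₂, outer (ketW (kron3 (U₁:Mat2) (U₂:Mat2) (U₂:Mat2))) a b ∂μ
  refine MeasureTheory.continuous_of_dominated (bound := fun _ => (1:ℝ)) ?_ ?_ ?_ ?_
  · intro U₁
    exact (cont_inner2 U₁ a b).aestronglyMeasurable
  · intro U₁
    exact Filter.Eventually.of_forall fun U₂ => norm_outer_le_one U₁ U₂ U₂ a b
  · exact MeasureTheory.integrable_const 1
  · exact Filter.Eventually.of_forall fun U₂ =>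
      cont_outer (v := fun U₁ : SU2 => ketW (kron3 (U₁:Mat2) (U₂:Mat2) (U₂:Mat2)))
        (fun p => cont_ketW3 (f := fun U₁ : SU2 => (U₁:Mat2)) (g := fun _ => (U₂:Mat2))
          (h := fun _ => (U₂:Mat2)) cont_entry (fun _ _ => continuous_const)
          (fun _ _ => continuous_const) p) a b

lemma M1_eq : M1 μ = intMat μ (N1 μ) := rfl
lemma M2_eq : M2 μ = intMat μ (N2 μ) := rfl

lemma M1_inv (B : SU2) : (IdKX (cB B))ᴴ * M1 μ * IdKX (cB B) = M1 μ := by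
  set Bc := SU2.conj B with hBc
  rw [M1_eq, intMat_mul_mul μ _ _ _ (cont_N1 μ)]
  have step2 : ∀ U₁ : SU2, (IdKX (cB B))ᴴ * N1 μ U₁ * IdKX (cB B) = N1 μ (U₁ * Bc) := by
    intro U₁
    rw [N1, intMat_mul_mul μ _ _ _ (cont_inner1 U₁)]
    have hker : ∀ U₂ : SU2,
        (IdKX (cB B))ᴴ * outer (ketW (kron3 (U₁:Mat2) (U₂:Mat2) (U₁:Mat2))) * IdKX (cB B)
        = outer (ketW (kron3 (((U₁*Bc : SU2)):Mat2) (((U₂*Bc : SU2)):Mat2)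
            (((U₁*Bc : SU2)):Mat2))) := by
      intro U₂
      rw [gH_outer_g, cB, kron3_mul]
      rfl
    simp only [hker]
    ext a b
    show (∫ U₂ : SU2, outer (ketW (kron3 (((U₁*Bc : SU2)):Mat2) (((U₂*Bc : SU2)):Mat2)
      (((U₁*Bc : SU2)):Mat2))) a b ∂μ) = N1 μ (U₁ * Bc) a b
    exact SU2.integral_mul_right μ Bc
      (fun V : SU2 => outer (ketW (kron3 (((U₁*Bc : SU2)):Mat2) ((V:Mat2))
        (((U₁*Bc : SU2)):Mat2))) a b) (cont_inner1 (U₁*Bc) a b)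
  simp only [step2]
  ext a b
  show (∫ U₁ : SU2, N1 μ (U₁ * Bc) a b ∂μ) = intMat μ (N1 μ) a b
  exact SU2.integral_mul_right μ Bc (fun V : SU2 => N1 μ V a b) (cont_N1 μ a b)

lemma M2_inv (B : SU2) : (IdKX (cB B))ᴴ * M2 μ * IdKX (cB B) = M2 μ := by
  set Bc := SU2.conj B with hBc
  rw [M2_eq, intMat_mul_mul μ _ _ _ (cont_N2 μ)]
  have step2 : ∀ U₁ : SU2, (IdKX (cB B))ᴴ * N2 μ U₁ * IdKX (cB B) = N2 μ (U₁ * Bc) := by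
    intro U₁
    rw [N2, intMat_mul_mul μ _ _ _ (cont_inner2 U₁)]
    have hker : ∀ U₂ : SU2,
        (IdKX (cB B))ᴴ * outer (ketW (kron3 (U₁:Mat2) (U₂:Mat2) (U₂:Mat2))) * IdKX (cB B)
        = outer (ketW (kron3 (((U₁*Bc : SU2)):Mat2) (((U₂*Bc : SU2)):Mat2)
            (((U₂*Bc : SU2)):Mat2))) := by
      intro U₂
      rw [gH_outer_g, cB, kron3_mul]
      rfl
    simp only [hker]
    ext a b
    show (∫ U₂ : SU2, outer (ketW (kron3 (((U₁*Bc : SU2)):Mat2) (((U₂*Bc : SU2)):Mat2)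
      (((U₂*Bc : SU2)):Mat2))) a b ∂μ) = N2 μ (U₁ * Bc) a b
    exact SU2.integral_mul_right μ Bc
      (fun V : SU2 => outer (ketW (kron3 (((U₁*Bc : SU2)):Mat2) ((V:Mat2)) ((V:Mat2)))) a b)
      (cont_inner2 (U₁*Bc) a b)
  simp only [step2]
  ext a b
  show (∫ U₁ : SU2, N2 μ (U₁ * Bc) a b ∂μ) = intMat μ (N2 μ) a b
  exact SU2.integral_mul_right μ Bc (fun V : SU2 => N2 μ V a b) (cont_N2 μ a b)

end Main

/-- Any parallelized tester can be replaced, without changing the average success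
probability, by one whose normalization operator `X'` commutes with `B⊗B⊗B` for all
`B ∈ SU(2)`. -/
theorem symmetrize_X (μ : Measure SU2) [IsProbabilityMeasure μ] [μ.IsMulLeftInvariant]
    (P₁ P₂ : Mat64) (X : Mat8) (h₁ : P₁.PosSemidef) (h₂ : P₂.PosSemidef)
    (hX : X.PosSemidef) (hTr : X.trace = 1) (hsum : P₁ + P₂ = IdKX X) :
    ∃ (P₁' P₂' : Mat64) (X' : Mat8),
      P₁'.PosSemidef ∧ P₂'.PosSemidef ∧ X'.PosSemidef ∧ X'.trace = 1 ∧
      P₁' + P₂' = IdKX X' ∧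
      (1/2 : ℂ) * (M1 μ * P₁' + M2 μ * P₂').trace
        = (1/2 : ℂ) * (M1 μ * P₁ + M2 μ * P₂).trace ∧
      ∀ B : SU2, X' * kron3 B B B = kron3 B B B * X' := by
  have contG : ∀ (P : Mat64), ∀ a b : Idx6,
      Continuous fun B : SU2 => (IdKX (cB B) * P * (IdKX (cB B))ᴴ) a b := fun P =>
    cont_mul_entry (cont_mul_entry (cont_IdKX_entry cont_cB) (cont_const_entry P))
      (cont_conjT_entry (cont_IdKX_entry cont_cB))
  refine ⟨intMat μ (fun B => IdKX (cB B) * P₁ * (IdKX (cB B))ᴴ),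
    intMat μ (fun B => IdKX (cB B) * P₂ * (IdKX (cB B))ᴴ),
    intMat μ (fun B => cB B * X * (cB B)ᴴ), ?_, ?_, ?_, ?_, ?_, ?_, ?_⟩
  · exact intMat_posSemidef μ _ (contG P₁) (fun B => h₁.mul_mul_conjTranspose_same _)
  · exact intMat_posSemidef μ _ (contG P₂) (fun B => h₂.mul_mul_conjTranspose_same _)
  · exact intMat_posSemidef μ _ (cont_cXcH X) (fun B => hX.mul_mul_conjTranspose_same _)
  · rw [intMat_trace μ _ (cont_cXcH X)]
    have h1 : ∀ B : SU2, (cB B * X * (cB B)ᴴ).trace = 1 := by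
      intro B
      rw [Matrix.trace_mul_cycle, cB_H_mul, Matrix.one_mul, hTr]
    simp only [h1]
    simp [MeasureTheory.integral_const, measure_univ]
  · rw [intMat_add μ _ _ (contG P₁) (contG P₂)]
    have h1 : ∀ B : SU2, IdKX (cB B) * P₁ * (IdKX (cB B))ᴴ + IdKX (cB B) * P₂ * (IdKX (cB B))ᴴ
        = IdKX (cB B * X * (cB B)ᴴ) := by
      intro B
      have h2 : IdKX (cB B) * (P₁ + P₂) * (IdKX (cB B))ᴴ = IdKX (cB B * X * (cB B)ᴴ) := by
        rw [hsum, IdKX_conjTranspose, IdKX_mul, IdKX_mul]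
      rw [← h2, Matrix.mul_add, Matrix.add_mul]
    simp only [h1]
    rw [← intMat_IdKX μ _ (cont_cXcH X)]
  · have key : ∀ (M P : Mat64), (∀ B : SU2, (IdKX (cB B))ᴴ * M * IdKX (cB B) = M) →
        (M * intMat μ (fun B => IdKX (cB B) * P * (IdKX (cB B))ᴴ)).trace = (M * P).trace := by
      intro M P hM
      rw [trace_mul_intMat μ _ _ (contG P)]
      have h2 : ∀ B : SU2,
          (M * (IdKX (cB B) * P * (IdKX (cB B))ᴴ)).trace = (M * P).trace := by
        intro B
        conv_rhs => rw [← hM B]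
        simp only [← Matrix.mul_assoc]
        rw [Matrix.trace_mul_comm]
        simp only [← Matrix.mul_assoc]
      simp only [h2]
      simp [MeasureTheory.integral_const, measure_univ]
    rw [Matrix.trace_add, Matrix.trace_add, key (M1 μ) P₁ (M1_inv μ), key (M2 μ) P₂ (M2_inv μ)]
  · intro B₀
    show intMat μ (fun B => cB B * X * (cB B)ᴴ) * cB B₀
      = cB B₀ * intMat μ (fun B => cB B * X * (cB B)ᴴ)
    have h1 : cB B₀ * intMat μ (fun B => cB B * X * (cB B)ᴴ) * (cB B₀)ᴴ
        = intMat μ (fun B => cB B * X * (cB B)ᴴ) := by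
      rw [intMat_mul_mul μ _ _ _ (cont_cXcH X)]
      have h2 : ∀ B : SU2, cB B₀ * (cB B * X * (cB B)ᴴ) * (cB B₀)ᴴ
          = cB (B₀ * B) * X * (cB (B₀ * B))ᴴ := by
        intro B
        rw [cB_mul, Matrix.conjTranspose_mul]
        simp only [Matrix.mul_assoc]
      simp only [h2]
      ext a b
      exact SU2.integral_mul_left μ B₀ (fun V : SU2 => (cB V * X * (cB V)ᴴ) a b)
        (cont_cXcH X a b)
    calc intMat μ (fun B => cB B * X * (cB B)ᴴ) * cB B₀
        = (cB B₀ * intMat μ (fun B => cB B * X * (cB B)ᴴ) * (cB B₀)ᴴ) * cB B₀ := by rw [h1]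
      _ = cB B₀ * intMat μ (fun B => cB B * X * (cB B)ᴴ) * ((cB B₀)ᴴ * cB B₀) := by
          simp only [Matrix.mul_assoc]
      _ = cB B₀ * intMat μ (fun B => cB B * X * (cB B)ᴴ) := by
          rw [cB_H_mul, Matrix.mul_one]
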